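/- Let η(s) = (1/2)(1 + tanh(s/2)). For any r₀ > 0 there exists M₁ > 0 such that for all s, h ∈ ℝ with |h| ≤ r₀, |η(s + h) - η(s)| / η'(s) ≤ M₁. -/

import Mathlib

lemma eta_formula (s : ℝ) :
    (1 / 2 : ℝ) * (1 + Real.tanh (s / 2)) = Real.exp s / (1 + Real.exp s) := by
  rw [Real.tanh_eq_sinh_div_cosh, Real.sinh_eq, Real.cosh_eq]
  have h1 : Real.exp (s / 2) * Real.exp (s / 2) = Real.exp s := by
    rw [← Real.exp_add]; ring_nf
  have h2 : Real.exp (-(s / 2)) = (Real.exp (s / 2))⁻¹ := Real.exp_neg _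
  have h3 : Real.exp (s / 2) > 0 := Real.exp_pos _
  have h4 : (0:ℝ) < 1 + Real.exp s := by positivity
  rw [h2]
  field_simp
  nlinarith [h1, h3]

theorem eta_increment_ratio_bounded (η : ℝ → ℝ)
    (hη : ∀ s : ℝ, η s = (1 / 2) * (1 + Real.tanh (s / 2))) :
    ∀ r₀ : ℝ, 0 < r₀ → ∃ M₁ : ℝ, 0 < M₁ ∧
      ∀ s h : ℝ, |h| ≤ r₀ → |η (s + h) - η s| / deriv η s ≤ M₁ := by
  have hfun : η = fun x => Real.exp x / (1 + Real.exp x) := by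
    funext x; rw [hη x, eta_formula]
  subst hfun
  intro r₀ hr₀
  refine ⟨Real.exp r₀ * Real.exp r₀, by positivity, ?_⟩
  intro s h hh
  have hE : (0:ℝ) < Real.exp s := Real.exp_pos s
  have hE' : (0:ℝ) < Real.exp (s + h) := Real.exp_pos _
  have hd1 : (0:ℝ) < 1 + Real.exp s := by positivity
  have hd2 : (0:ℝ) < 1 + Real.exp (s + h) := by positivity
  -- derivative
  have hder : deriv (fun x => Real.exp x / (1 + Real.exp x)) s
      = Real.exp s / (1 + Real.exp s) ^ 2 := by
    have h1 : HasDerivAt (fun x => Real.exp x) (Real.exp s) s := Real.hasDerivAt_exp s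
    have h2 : HasDerivAt (fun x : ℝ => 1 + Real.exp x) (Real.exp s) s := h1.const_add 1
    have h3 := h1.div h2 hd1.ne'
    have h4 : (Real.exp s * (1 + Real.exp s) - Real.exp s * Real.exp s)
        / (1 + Real.exp s) ^ 2 = Real.exp s / (1 + Real.exp s) ^ 2 := by ring_nf
    rw [← h4]; exact h3.deriv
  rw [hder]
  have hdpos : (0:ℝ) < Real.exp s / (1 + Real.exp s) ^ 2 := by positivity
  rw [div_le_iff₀ hdpos]
  -- rewrite the difference
  have hdiff : Real.exp (s + h) / (1 + Real.exp (s + h)) - Real.exp s / (1 + Real.exp s)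
      = Real.exp s * (Real.exp h - 1) / ((1 + Real.exp (s + h)) * (1 + Real.exp s)) := by
    rw [Real.exp_add]
    field_simp
    ring
  show |Real.exp (s + h) / (1 + Real.exp (s + h)) - Real.exp s / (1 + Real.exp s)| ≤ _
  rw [hdiff, abs_div, abs_mul, abs_of_pos hE, abs_of_pos (by positivity : (0:ℝ) < (1 + Real.exp (s + h)) * (1 + Real.exp s))]
  rw [div_le_iff₀ (by positivity)]
  -- key bounds
  have hh1 : h ≤ r₀ := le_trans (le_abs_self h) hh
  have hh2 : -r₀ ≤ h := by
    have := neg_abs_le h; linarith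
  have her : (1:ℝ) ≤ Real.exp r₀ := Real.one_le_exp hr₀.le
  have hA : |Real.exp h - 1| ≤ Real.exp r₀ := by
    rw [abs_le]
    constructor
    · nlinarith [Real.exp_pos h]
    · have : Real.exp h ≤ Real.exp r₀ := Real.exp_le_exp.mpr hh1
      linarith
  have hB : 1 + Real.exp s ≤ Real.exp r₀ * (1 + Real.exp (s + h)) := by
    have h2 : Real.exp s ≤ Real.exp r₀ * Real.exp (s + h) := by
      rw [← Real.exp_add]
      exact Real.exp_le_exp.mpr (by linarith)
    nlinarith
  have key : |Real.exp h - 1| * (1 + Real.exp s)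
      ≤ Real.exp r₀ * (Real.exp r₀ * (1 + Real.exp (s + h))) :=
    mul_le_mul hA hB hd1.le (Real.exp_pos r₀).le
  have lhs_eq : Real.exp s * |Real.exp h - 1|
      = (|Real.exp h - 1| * (1 + Real.exp s)) * (Real.exp s / (1 + Real.exp s)) := by
    field_simp
  have rhs_eq : Real.exp r₀ * Real.exp r₀ * (Real.exp s / (1 + Real.exp s) ^ 2)
        * ((1 + Real.exp (s + h)) * (1 + Real.exp s))
      = (Real.exp r₀ * (Real.exp r₀ * (1 + Real.exp (s + h))))
        * (Real.exp s / (1 + Real.exp s)) := by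
    field_simp
  rw [lhs_eq, rhs_eq]
  exact mul_le_mul_of_nonneg_right key (by positivity)
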